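/- Let l, n be positive integers, let C be a binary linear code of length l+n (a linear subspace of F_2^{l+n}), let δ be the minimum Hamming weight of a nonzero codeword of C^⊥, and fix a nonnegative integer m. Let T be the set of all tuples (v_1,...,v_l) ∈ (C^⊥)^l such that for each j the first l coordinates of v_j equal the j-th standard unit vector e_j of F_2^l and |(⋃_{j=1}^l supp(v_j)) \ {1,...,l}| = m, and let Φ : T → sets of {1,...,n} be the map sending (v_1,...,v_l) to {i ∈ {1,...,n} : l+i ∈ ⋃_{j=1}^l supp(v_j)}. Then the number of distinct values of Φ (i.e. the number of access groups of size m arising from such tuples) is at most |T|, and if 2m < 3δ − 2 then Φ is injective, so the number of such access groups equals |T|. -/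
import Mathlib


/-- The dual code of a binary linear code `C ⊆ F_2^N` under the standard inner product. -/
def dualCode {N : ℕ} (C : Submodule (ZMod 2) (Fin N → ZMod 2)) :
    Submodule (ZMod 2) (Fin N → ZMod 2) where
  carrier := {v | ∀ c ∈ C, ∑ h, v h * c h = 0}
  add_mem' := by
    intro a b ha hb c hc
    simp only [Set.mem_setOf_eq] at *
    simp [Pi.add_apply, add_mul, Finset.sum_add_distrib, ha c hc, hb c hc]
  zero_mem' := by
    intro c hc
    simp
  smul_mem' := by
    intro r a ha c hc
    simp only [Set.mem_setOf_eq] at *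
    simp [Pi.smul_apply, smul_eq_mul, mul_assoc, ← Finset.mul_sum, ha c hc]

/-- The minimum Hamming weight of a nonzero codeword of `D`. -/
noncomputable def minWeight {N : ℕ} (D : Submodule (ZMod 2) (Fin N → ZMod 2)) : ℕ :=
  sInf {w | ∃ c ∈ D, c ≠ 0 ∧ w = hammingNorm c}

private lemma zmod2_add_ne_zero (a b : ZMod 2) :
    a + b ≠ 0 ↔ ((a ≠ 0 ∨ b ≠ 0) ∧ ¬(a ≠ 0 ∧ b ≠ 0)) := by revert a b; decide

private lemma zmod2_add_eq_zero (a b : ZMod 2) : a + b = 0 ↔ a = b := by revert a b; decide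

private lemma key_inj {l n : ℕ} (C : Submodule (ZMod 2) (Fin (l + n) → ZMod 2)) (m : ℕ)
    (h3 : 2 * m + 2 < 3 * minWeight (dualCode C))
    (v w : Fin l → Fin (l + n) → ZMod 2)
    (hv1 : ∀ j, v j ∈ dualCode C) (hw1 : ∀ j, w j ∈ dualCode C)
    (hv2 : ∀ j j' : Fin l, v j (Fin.castAdd n j') = if j' = j then 1 else 0)
    (hw2 : ∀ j j' : Fin l, w j (Fin.castAdd n j') = if j' = j then 1 else 0)
    (hv3 : ((⋃ j, {h | v j h ≠ 0}) \ {h : Fin (l + n) | (h : ℕ) < l}).ncard = m)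
    (hSiff : ∀ h : Fin (l + n), l ≤ (h : ℕ) →
      ((∃ j, v j h ≠ 0) ↔ (∃ j, w j h ≠ 0)))
    (j : Fin l) : v j = w j := by
  classical
  by_contra hne
  set δ := minWeight (dualCode C) with hδ
  have δ_le : ∀ c ∈ dualCode C, c ≠ 0 → δ ≤ hammingNorm c := fun c hc h0 =>
    Nat.sInf_le ⟨c, hc, h0, rfl⟩
  set A : Finset (Fin (l + n)) :=
    Finset.univ.filter (fun h => l ≤ (h : ℕ) ∧ v j h ≠ 0) with hA
  set B : Finset (Fin (l + n)) :=
    Finset.univ.filter (fun h => l ≤ (h : ℕ) ∧ w j h ≠ 0) with hB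
  set S : Finset (Fin (l + n)) :=
    Finset.univ.filter (fun h => l ≤ (h : ℕ) ∧ ∃ j', v j' h ≠ 0) with hSdef
  have hAS : A ⊆ S := by
    intro h hh
    simp only [hA, hSdef, Finset.mem_filter, Finset.mem_univ, true_and] at *
    exact ⟨hh.1, j, hh.2⟩
  have hBS : B ⊆ S := by
    intro h hh
    simp only [hB, hSdef, Finset.mem_filter, Finset.mem_univ, true_and] at *
    exact ⟨hh.1, (hSiff h hh.1).2 ⟨j, hh.2⟩⟩
  have hScard : S.card = m := by
    rw [← hv3]
    have hset : ((⋃ j, {h | v j h ≠ 0}) \ {h : Fin (l + n) | (h : ℕ) < l}) = ↑S := by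
      ext h
      simp only [Set.mem_diff, Set.mem_iUnion, Set.mem_setOf_eq, hSdef,
        Finset.coe_filter, Finset.mem_univ, true_and, not_lt]
      tauto
    rw [hset, Set.ncard_coe_finset]
  have hlow : ∀ (u : Fin l → Fin (l + n) → ZMod 2),
      (∀ j j' : Fin l, u j (Fin.castAdd n j') = if j' = j then 1 else 0) →
      ∀ h : Fin (l + n), (h : ℕ) < l →
        u j h = if (h : ℕ) = (j : ℕ) then 1 else 0 := by
    intro u hu h hh
    have he : h = Fin.castAdd n ⟨(h : ℕ), hh⟩ := by
      apply Fin.ext; simp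
    rw [he, hu]
    simp [Fin.ext_iff]
  have hvlow := hlow v hv2
  have hwlow := hlow w hw2
  have hjlow : ((Fin.castAdd n j : Fin (l + n)) : ℕ) < l := by simpa using j.isLt
  have hsupp : ∀ (u : Fin (l + n) → ZMod 2),
      (∀ h : Fin (l + n), (h : ℕ) < l → u h = if (h : ℕ) = (j : ℕ) then 1 else 0) →
      (Finset.univ.filter fun h => u h ≠ 0)
        = insert (Fin.castAdd n j)
          (Finset.univ.filter fun h : Fin (l + n) => l ≤ (h : ℕ) ∧ u h ≠ 0) := by
    intro u hu
    ext h
    simp only [Finset.mem_filter, Finset.mem_univ, true_and, Finset.mem_insert]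
    by_cases hh : (h : ℕ) < l
    · rw [hu h hh]
      by_cases hj : (h : ℕ) = (j : ℕ)
      · simp [Fin.ext_iff, hj, Nat.not_le.mpr hh]
      · simp [Fin.ext_iff, hj, Nat.not_le.mpr hh]
    · have hne' : h ≠ Fin.castAdd n j := by
        intro e; rw [e] at hh; exact hh hjlow
      simp [hne', Nat.not_lt.mp hh]
  have hvj_ne : v j ≠ 0 := by
    intro h0
    have := hv2 j j
    rw [h0] at this
    simp at this
  have hwj_ne : w j ≠ 0 := by
    intro h0
    have := hw2 j j
    rw [h0] at this
    simp at this
  have hjA : Fin.castAdd n j ∉ A := by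
    simp [hA, Nat.not_le.mpr hjlow]
  have hjB : Fin.castAdd n j ∉ B := by
    simp [hB, Nat.not_le.mpr hjlow]
  have hcardA : hammingNorm (v j) = A.card + 1 := by
    show (Finset.univ.filter fun h => v j h ≠ 0).card = A.card + 1
    rw [hsupp (v j) hvlow, Finset.card_insert_of_notMem hjA]
  have hcardB : hammingNorm (w j) = B.card + 1 := by
    show (Finset.univ.filter fun h => w j h ≠ 0).card = B.card + 1
    rw [hsupp (w j) hwlow, Finset.card_insert_of_notMem hjB]
  have hδA : δ ≤ A.card + 1 := hcardA ▸ δ_le (v j) (hv1 j) hvj_ne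
  have hδB : δ ≤ B.card + 1 := hcardB ▸ δ_le (w j) (hw1 j) hwj_ne
  set d : Fin (l + n) → ZMod 2 := v j + w j with hd
  have hd_mem : d ∈ dualCode C := (dualCode C).add_mem (hv1 j) (hw1 j)
  have hd_ne : d ≠ 0 := by
    intro h0
    apply hne
    funext h
    exact (zmod2_add_eq_zero _ _).mp (congrFun h0 h)
  have hsuppd : (Finset.univ.filter fun h => d h ≠ 0) = (A ∪ B) \ (A ∩ B) := by
    ext h
    simp only [Finset.mem_sdiff, Finset.mem_union, Finset.mem_inter, hA, hB,
      Finset.mem_filter, Finset.mem_univ, true_and, hd, Pi.add_apply]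
    rw [zmod2_add_ne_zero]
    by_cases hh : (h : ℕ) < l
    · rw [hvlow h hh, hwlow h hh]
      have := Nat.not_le.mpr hh
      tauto
    · have := Nat.not_lt.mp hh
      tauto
  have hδd : δ ≤ ((A ∪ B) \ (A ∩ B)).card := by
    have := δ_le d hd_mem hd_ne
    rwa [show hammingNorm d = (Finset.univ.filter fun h => d h ≠ 0).card from rfl,
      hsuppd] at this
  have h1 : ((A ∪ B) \ (A ∩ B)).card + (A ∩ B).card = (A ∪ B).card :=
    Finset.card_sdiff_add_card_eq_card Finset.inter_subset_union
  have h2 : (A ∪ B).card + (A ∩ B).card = A.card + B.card :=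
    Finset.card_union_add_card_inter A B
  have h4 : (A ∪ B).card ≤ m :=
    hScard ▸ Finset.card_le_card (Finset.union_subset hAS hBS)
  omega

/-- Counting content of **Theorem 6**: let `T` be the set of tuples `(v_1, …, v_l)` of dual
codewords whose first `l` coordinates form the standard unit vectors of `F_2^l` and whose
supports cover exactly `m` coordinates beyond the first `l`, and let `Φ` send such a tuple to
the corresponding access group of participants.  Then the number of access groups of size `m`
is at most `|T|`, and if `m < (3/2)δ − 1` (in the integer form `2m + 2 < 3δ`) then `Φ` is
injective on `T`, so the number of access groups of size `m` equals `|T|`. -/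
theorem count_access_groups
    (l n : ℕ) (hl : 0 < l) (hn : 0 < n)
    (C : Submodule (ZMod 2) (Fin (l + n) → ZMod 2))
    (δ : ℕ) (hδ : δ = minWeight (dualCode C))
    (m : ℕ)
    (T : Set (Fin l → Fin (l + n) → ZMod 2))
    (hT : T = {v | (∀ j, v j ∈ dualCode C) ∧
        (∀ j j' : Fin l, v j (Fin.castAdd n j') = if j' = j then 1 else 0) ∧
        ((⋃ j, {h | v j h ≠ 0}) \ {h : Fin (l + n) | (h : ℕ) < l}).ncard = m})
    (Φ : (Fin l → Fin (l + n) → ZMod 2) → Set (Fin n))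
    (hΦ : Φ = fun v => {i : Fin n | Fin.natAdd l i ∈ ⋃ j, {h | v j h ≠ 0}}) :
    (Φ '' T).ncard ≤ T.ncard ∧
    (2 * m + 2 < 3 * δ → Set.InjOn Φ T ∧ (Φ '' T).ncard = T.ncard) := by
  subst hT hΦ hδ
  refine ⟨Set.ncard_image_le (Set.toFinite _), fun h3 => ?_⟩
  have hinj : Set.InjOn (fun v => {i : Fin n | Fin.natAdd l i ∈ ⋃ j, {h | v j h ≠ 0}})
      {v : Fin l → Fin (l + n) → ZMod 2 | (∀ j, v j ∈ dualCode C) ∧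
        (∀ j j' : Fin l, v j (Fin.castAdd n j') = if j' = j then 1 else 0) ∧
        ((⋃ j, {h | v j h ≠ 0}) \ {h : Fin (l + n) | (h : ℕ) < l}).ncard = m} := by
    intro v hv w hw hvw
    obtain ⟨hv1, hv2, hv3⟩ := hv
    obtain ⟨hw1, hw2, _⟩ := hw
    have hSiff : ∀ h : Fin (l + n), l ≤ (h : ℕ) →
        ((∃ j, v j h ≠ 0) ↔ (∃ j, w j h ≠ 0)) := by
      intro h hh
      have hlt : (h : ℕ) - l < n := by have := h.isLt; omega
      have hi : h = Fin.natAdd l ⟨(h : ℕ) - l, hlt⟩ := by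
        apply Fin.ext; simp; omega
      have := Set.ext_iff.mp hvw ⟨(h : ℕ) - l, hlt⟩
      simp only [Set.mem_setOf_eq, Set.mem_iUnion] at this
      rw [hi]
      exact this
    exact funext fun j => key_inj C m h3 v w hv1 hw1 hv2 hw2 hv3 hSiff j
  exact ⟨hinj, Set.ncard_image_of_injOn hinj⟩
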